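/- Let M ⊆ ℝⁿ be closed, B : ℝⁿ → ℝ continuous, and K := {x ∈ M : B(x) ≤ 0}. Let x ∈ ∂K ∩ int(M) be such that B is continuously differentiable on a neighborhood of x and ∇B(x) ≠ 0. Then T_K(x) = {v ∈ ℝⁿ : ⟨∇B(x), v⟩ ≤ 0}. -/

import Mathlib

open Filter Set
open scoped RealInnerProductSpace

/-- The contingent cone of `K` at `x` (sequence characterization). -/
def contingentCone {n : ℕ} (K : Set (EuclideanSpace ℝ (Fin n)))
    (x : EuclideanSpace ℝ (Fin n)) : Set (EuclideanSpace ℝ (Fin n)) :=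
  {v | ∃ (h : ℕ → ℝ) (w : ℕ → EuclideanSpace ℝ (Fin n)),
      (∀ i, 0 < h i) ∧ Filter.Tendsto h Filter.atTop (nhds 0) ∧
        Filter.Tendsto w Filter.atTop (nhds v) ∧ ∀ i, x + h i • w i ∈ K}

set_option maxHeartbeats 1000000 in
theorem stmt_5 {n : ℕ} (M : Set (EuclideanSpace ℝ (Fin n))) (hM : IsClosed M)
    (B : EuclideanSpace ℝ (Fin n) → ℝ) (hBcont : Continuous B)
    (K : Set (EuclideanSpace ℝ (Fin n))) (hK : K = {y ∈ M | B y ≤ 0})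
    (x : EuclideanSpace ℝ (Fin n)) (hx : x ∈ frontier K ∩ interior M)
    (U : Set (EuclideanSpace ℝ (Fin n))) (hU : IsOpen U) (hxU : x ∈ U)
    (hB : ContDiffOn ℝ 1 B U) (hgrad : gradient B x ≠ 0) :
    contingentCone K x = {v | ⟪gradient B x, v⟫ ≤ 0} := by
  obtain ⟨hxF, hxM⟩ := hx
  have hKclosed : IsClosed K := by
    rw [hK]
    exact hM.inter (isClosed_le hBcont continuous_const)
  have hxK : x ∈ K := by
    have := frontier_subset_closure hxF
    rwa [hKclosed.closure_eq] at this
  have hBxle : B x ≤ 0 := by rw [hK] at hxK; exact hxK.2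
  have hBx0 : B x = 0 := by
    rcases lt_or_eq_of_le hBxle with hlt | heq
    · exfalso
      have hV : interior M ∩ B ⁻¹' Iio 0 ∈ nhds x :=
        (isOpen_interior.inter (isOpen_Iio.preimage hBcont)).mem_nhds ⟨hxM, hlt⟩
      have hsub : interior M ∩ B ⁻¹' Iio 0 ⊆ K := by
        rw [hK]
        rintro y ⟨h1, h2⟩
        exact ⟨interior_subset h1, le_of_lt h2⟩
      have : x ∈ interior K := mem_interior_iff_mem_nhds.2 (Filter.mem_of_superset hV hsub)
      exact hxF.2 this
    · exact heq
  have hdiff : DifferentiableAt ℝ B x :=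
    ((hB.differentiableOn one_ne_zero).differentiableAt (hU.mem_nhds hxU))
  set f := fderiv ℝ B x with hf
  have hfd : HasFDerivAt B f x := hdiff.hasFDerivAt
  have hinner : ∀ u, ⟪gradient B x, u⟫ = f u := fun u => by
    rw [gradient]; exact InnerProductSpace.toDual_symm_apply
  ext v
  simp only [mem_setOf_eq, hinner]
  constructor
  · rintro ⟨h, w, hpos, hh0, hwv, hmem⟩
    set y : ℕ → EuclideanSpace ℝ (Fin n) := fun i => x + h i • w i with hy
    have hyx : Tendsto y atTop (nhds x) := by
      have h1 : Tendsto (fun i => h i • w i) atTop (nhds ((0:ℝ) • v)) := hh0.smul hwv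
      rw [zero_smul] at h1
      simpa using tendsto_const_nhds.add h1
    have hlo := hfd.isLittleO.comp_tendsto hyx
    have hbo : (fun i => y i - x) =O[atTop] h := by
      apply Asymptotics.IsBigO.of_bound (‖v‖ + 1)
      have hwb : ∀ᶠ i in atTop, ‖w i‖ ≤ ‖v‖ + 1 :=
        hwv.norm.eventually_le_const (lt_add_one ‖v‖)
      filter_upwards [hwb] with i hi
      have : y i - x = h i • w i := by simp [hy]
      rw [this, norm_smul, Real.norm_eq_abs, abs_of_pos (hpos i)]
      nlinarith [(hpos i).le, norm_nonneg (w i)]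
    have hdiv : Tendsto (fun i => (B (y i) - B x - f (y i - x)) / h i) atTop (nhds 0) :=
      (hlo.trans_isBigO hbo).tendsto_div_nhds_zero
    have hfw : Tendsto (fun i => f (w i)) atTop (nhds (f v)) :=
      (f.continuous.tendsto v).comp hwv
    have hquot : Tendsto (fun i => B (y i) / h i) atTop (nhds (f v)) := by
      have heq : ∀ i, B (y i) / h i = (B (y i) - B x - f (y i - x)) / h i + f (w i) := by
        intro i
        have h1 : y i - x = h i • w i := by simp [hy]
        rw [h1, hBx0, map_smul, smul_eq_mul]
        field_simp [(hpos i).ne']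
        ring
      simp only [heq]
      simpa using hdiv.add hfw
    refine le_of_tendsto hquot (Eventually.of_forall fun i => ?_)
    have hyK : B (y i) ≤ 0 := by
      have := hmem i; rw [hK] at this; exact this.2
    exact div_nonpos_of_nonpos_of_nonneg hyK (hpos i).le
  · intro hv
    set g := gradient B x with hg
    have hg2 : (0:ℝ) < f g := by
      rw [← hinner g, real_inner_self_eq_norm_sq]
      have h1 : (0:ℝ) < ‖g‖ := norm_pos_iff.mpr hgrad
      positivity
    have key : ∀ u : EuclideanSpace ℝ (Fin n), f u < 0 →
        ∀ᶠ t in nhdsWithin (0:ℝ) (Ioi 0), x + t • u ∈ K := by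
      intro u hu
      have h1 : HasDerivAt (fun t : ℝ => x + t • u) u 0 := by
        simpa using ((hasDerivAt_id (0:ℝ)).smul_const u).const_add x
      have hfd' : HasFDerivAt B f ((fun t : ℝ => x + t • u) 0) := by simpa using hfd
      have hder : HasDerivAt (fun t : ℝ => B (x + t • u)) (f u) 0 := by
        exact hfd'.comp_hasDerivAt 0 h1
      have hslope := hasDerivAt_iff_tendsto_slope.mp hder
      have hslope' : Tendsto (slope (fun t : ℝ => B (x + t • u)) 0) (nhdsWithin 0 (Ioi 0))
          (nhds (f u)) :=
        hslope.mono_left (nhdsWithin_mono _ fun t ht => ne_of_gt ht)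
      have hneg : ∀ᶠ t in nhdsWithin (0:ℝ) (Ioi 0),
          slope (fun t : ℝ => B (x + t • u)) 0 t < 0 :=
        hslope'.eventually_lt_const hu
      have hcont : Tendsto (fun t : ℝ => x + t • u) (nhdsWithin 0 (Ioi 0)) (nhds x) := by
        have hc : Continuous (fun t : ℝ => x + t • u) := by continuity
        have h2 : Tendsto (fun t : ℝ => x + t • u) (nhdsWithin (0:ℝ) (Ioi 0))
            (nhds (x + (0:ℝ) • u)) := (hc.tendsto 0).mono_left nhdsWithin_le_nhds
        simpa using h2
      have hM' : ∀ᶠ t in nhdsWithin (0:ℝ) (Ioi 0), x + t • u ∈ interior M :=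
        hcont.eventually_mem (isOpen_interior.mem_nhds hxM)
      filter_upwards [hneg, hM', self_mem_nhdsWithin] with t h1' h2' h3'
      rw [hK]
      refine ⟨interior_subset h2', ?_⟩
      have hsl : slope (fun t : ℝ => B (x + t • u)) 0 t = B (x + t • u) / t := by
        rw [slope_def_field]
        simp [hBx0, div_eq_inv_mul]
      rw [hsl] at h1'
      have ht : (0:ℝ) < t := h3'
      have h4 := mul_neg_of_neg_of_pos h1' ht
      rw [div_mul_cancel₀ _ (ne_of_gt ht)] at h4
      exact h4.le
    have hchoice : ∀ i : ℕ, ∃ t : ℝ, t ∈ Ioo 0 (1/((i:ℝ)+1)) ∧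
        x + t • (v - (1/((i:ℝ)+1)) • g) ∈ K := by
      intro i
      have hci : (0:ℝ) < 1/((i:ℝ)+1) := by positivity
      have hfu : f (v - (1/((i:ℝ)+1)) • g) < 0 := by
        rw [map_sub, map_smul, smul_eq_mul]
        have h5 := mul_pos hci hg2
        linarith
      have hIoo : Ioo (0:ℝ) (1/((i:ℝ)+1)) ∈ nhdsWithin (0:ℝ) (Ioi 0) :=
        Ioo_mem_nhdsGT_of_mem ⟨le_rfl, hci⟩
      obtain ⟨t, ht1, ht2⟩ := ((key _ hfu).and (eventually_of_mem hIoo fun t ht => ht)).exists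
      exact ⟨t, ht2, ht1⟩
    choose t ht hmem using hchoice
    refine ⟨t, fun i => v - (1/((i:ℝ)+1)) • g, fun i => (ht i).1, ?_, ?_, hmem⟩
    · exact squeeze_zero (fun i => (ht i).1.le) (fun i => (ht i).2.le)
        tendsto_one_div_add_atTop_nhds_zero_nat
    · have h1 : Tendsto (fun i : ℕ => (1/((i:ℝ)+1)) • g) atTop (nhds ((0:ℝ) • g)) :=
        tendsto_one_div_add_atTop_nhds_zero_nat.smul_const g
      rw [zero_smul] at h1
      simpa using tendsto_const_nhds.sub h1
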